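/- High-frequency L∞ bound via LMI (sufficiency direction of Theorem 3): Let 0 < ν < 2, φ = (π/2)(ν−1), δ > 0, ω_H > 0, and let A ∈ ℝ^{n×n}, B ∈ ℝ^{n×m}, C ∈ ℝ^{p×n}, D ∈ ℝ^{p×m}. Suppose there exist Hermitian matrices U, V ∈ ℂ^{n×n} with V positive definite such that, with X = e^{iφ}AᵀU and Y = BᵀVA + e^{iφ}BᵀU, the Hermitian block matrix [[Sym(X) + AᵀVA − ω_H^{2ν}V, Y*, Cᵀ],[Y, −δI_m + BᵀVB, Dᵀ],[C, D, −δI_p]] is negative definite. Then σmax(D) < δ, and for every ω ≥ ω_H the matrix ω^ν e^{iπν/2} I_n − A is invertible and σmax(C(ω^ν e^{iπν/2} I_n − A)^{−1}B + D) < δ. -/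

import Mathlib

open Matrix Complex
open scoped Matrix Kronecker ComplexOrder

/-- The largest singular value (ℓ² operator norm) of a complex matrix. -/
noncomputable def sigmaMax {m n : ℕ} (M : Matrix (Fin m) (Fin n) ℂ) : ℝ :=
  ‖LinearMap.toContinuousLinearMap (Matrix.toEuclideanLin M)‖

/-- A real matrix regarded as a complex matrix. -/
noncomputable def cmap {a b : ℕ} (M : Matrix (Fin a) (Fin b) ℝ) : Matrix (Fin a) (Fin b) ℂ :=
  M.map Complex.ofReal

/-- ρ(θ, M) = [θ,1]* M [θ,1], real-valued for Hermitian M. -/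
noncomputable def rho (θ : ℂ) (M : Matrix (Fin 2) (Fin 2) ℂ) : ℝ :=
  (star ![θ, 1] ⬝ᵥ M *ᵥ ![θ, 1]).re

/-- Δ₀ = [[0, e^{iφ}],[e^{−iφ}, 0]]. -/
noncomputable def Delta0 (φ : ℝ) : Matrix (Fin 2) (Fin 2) ℂ :=
  !![0, Complex.exp ((φ : ℂ) * Complex.I);
     Complex.exp (-(φ : ℂ) * Complex.I), 0]

/-- Σ₀ = [[α, β e^{iφ}],[β e^{−iφ}, γ]]. -/
noncomputable def Sigma0 (φ α β γ : ℝ) : Matrix (Fin 2) (Fin 2) ℂ :=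
  !![(α : ℂ), (β : ℂ) * Complex.exp ((φ : ℂ) * Complex.I);
     (β : ℂ) * Complex.exp (-(φ : ℂ) * Complex.I), (γ : ℂ)]

/-- A 3×3 block matrix. -/
noncomputable def block3 {n m p : ℕ}
    (A11 : Matrix (Fin n) (Fin n) ℂ) (A12 : Matrix (Fin n) (Fin m) ℂ)
    (A13 : Matrix (Fin n) (Fin p) ℂ)
    (A21 : Matrix (Fin m) (Fin n) ℂ) (A22 : Matrix (Fin m) (Fin m) ℂ)
    (A23 : Matrix (Fin m) (Fin p) ℂ)
    (A31 : Matrix (Fin p) (Fin n) ℂ) (A32 : Matrix (Fin p) (Fin m) ℂ)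
    (A33 : Matrix (Fin p) (Fin p) ℂ) :
    Matrix ((Fin n ⊕ Fin m) ⊕ Fin p) ((Fin n ⊕ Fin m) ⊕ Fin p) ℂ :=
  Matrix.fromBlocks (Matrix.fromBlocks A11 A12 A21 A22)
    (Matrix.fromRows A13 A23) (Matrix.fromCols A31 A32) A33

/- ### Auxiliary lemmas -/

lemma cmap_conjTranspose {a b : ℕ} (M : Matrix (Fin a) (Fin b) ℝ) :
    (cmap M)ᴴ = (cmap M)ᵀ := by
  ext i j
  simp [cmap, Matrix.conjTranspose_apply, Matrix.transpose_apply, Matrix.map_apply]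

lemma cmap_tc {a b : ℕ} (M : Matrix (Fin a) (Fin b) ℝ) : ((cmap M)ᵀ)ᴴ = cmap M := by
  ext i j
  simp [cmap, Matrix.conjTranspose_apply, Matrix.transpose_apply, Matrix.map_apply]

lemma star_mulVec_dotProduct {a b : ℕ} (M : Matrix (Fin a) (Fin b) ℂ)
    (x : Fin b → ℂ) (w : Fin a → ℂ) :
    star (M *ᵥ x) ⬝ᵥ w = star x ⬝ᵥ (Mᴴ *ᵥ w) := by
  rw [star_mulVec, ← dotProduct_mulVec]

lemma trans_dot {a b : ℕ} (M : Matrix (Fin a) (Fin b) ℝ) (x : Fin b → ℂ) (w : Fin a → ℂ) :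
    star x ⬝ᵥ ((cmap M)ᵀ *ᵥ w) = star (cmap M *ᵥ x) ⬝ᵥ w := by
  rw [star_mulVec_dotProduct, cmap_conjTranspose]

lemma star_sum_elim {α : Type*} {β : Type*} (x : α → ℂ) (y : β → ℂ) :
    (star (Sum.elim x y) : α ⊕ β → ℂ) = Sum.elim (star x) (star y) := by
  funext i; cases i <;> rfl

lemma block3_quadform {n m p : ℕ}
    (A11 : Matrix (Fin n) (Fin n) ℂ) (A12 : Matrix (Fin n) (Fin m) ℂ)
    (A13 : Matrix (Fin n) (Fin p) ℂ)
    (A21 : Matrix (Fin m) (Fin n) ℂ) (A22 : Matrix (Fin m) (Fin m) ℂ)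
    (A23 : Matrix (Fin m) (Fin p) ℂ)
    (A31 : Matrix (Fin p) (Fin n) ℂ) (A32 : Matrix (Fin p) (Fin m) ℂ)
    (A33 : Matrix (Fin p) (Fin p) ℂ)
    (x : Fin n → ℂ) (u : Fin m → ℂ) (y : Fin p → ℂ) :
    star (Sum.elim (Sum.elim x u) y) ⬝ᵥ
      (block3 A11 A12 A13 A21 A22 A23 A31 A32 A33) *ᵥ (Sum.elim (Sum.elim x u) y)
    = star x ⬝ᵥ A11 *ᵥ x + star x ⬝ᵥ A12 *ᵥ u + star x ⬝ᵥ A13 *ᵥ y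
    + star u ⬝ᵥ A21 *ᵥ x + star u ⬝ᵥ A22 *ᵥ u + star u ⬝ᵥ A23 *ᵥ y
    + star y ⬝ᵥ A31 *ᵥ x + star y ⬝ᵥ A32 *ᵥ u + star y ⬝ᵥ A33 *ᵥ y := by
  rw [block3, star_sum_elim, star_sum_elim]
  simp only [fromBlocks_mulVec, Sum.elim_comp_inl, Sum.elim_comp_inr, fromRows_mulVec,
    fromCols_mulVec_sumElim, sumElim_dotProduct_sumElim, dotProduct_add,
    Pi.add_apply, Sum.elim_inl, Sum.elim_inr]
  ring

lemma quad_eval {n m p : ℕ} (δ w2 : ℝ) (e : ℂ)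
    (A : Matrix (Fin n) (Fin n) ℝ) (B : Matrix (Fin n) (Fin m) ℝ)
    (C : Matrix (Fin p) (Fin n) ℝ) (D : Matrix (Fin p) (Fin m) ℝ)
    (U V : Matrix (Fin n) (Fin n) ℂ) (hU : U.IsHermitian) (hV : V.IsHermitian)
    (x : Fin n → ℂ) (u : Fin m → ℂ) (y : Fin p → ℂ) :
    star (Sum.elim (Sum.elim x u) y) ⬝ᵥ
      (block3
        (e • ((cmap A)ᵀ * U) + (e • ((cmap A)ᵀ * U))ᴴ + (cmap A)ᵀ * V * cmap A - (w2:ℂ) • V)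
        ((cmap B)ᵀ * V * cmap A + e • ((cmap B)ᵀ * U))ᴴ ((cmap C)ᵀ)
        ((cmap B)ᵀ * V * cmap A + e • ((cmap B)ᵀ * U)) (-(δ:ℂ) • 1 + (cmap B)ᵀ * V * cmap B)
        ((cmap D)ᵀ)
        (cmap C) (cmap D) (-(δ:ℂ) • 1)) *ᵥ (Sum.elim (Sum.elim x u) y)
    = e * (star (cmap A *ᵥ x + cmap B *ᵥ u) ⬝ᵥ (U *ᵥ x))
    + (starRingEnd ℂ e) * (star x ⬝ᵥ (U *ᵥ (cmap A *ᵥ x + cmap B *ᵥ u)))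
    + star (cmap A *ᵥ x + cmap B *ᵥ u) ⬝ᵥ (V *ᵥ (cmap A *ᵥ x + cmap B *ᵥ u))
    - (w2:ℂ) * (star x ⬝ᵥ (V *ᵥ x)) - (δ:ℂ) * (star u ⬝ᵥ u)
    + star (cmap C *ᵥ x + cmap D *ᵥ u) ⬝ᵥ y + star y ⬝ᵥ (cmap C *ᵥ x + cmap D *ᵥ u)
    - (δ:ℂ) * (star y ⬝ᵥ y) := by
  have hXH : (e • ((cmap A)ᵀ * U))ᴴ = (starRingEnd ℂ e) • (U * cmap A) := by
    rw [conjTranspose_smul, conjTranspose_mul, cmap_tc, hU.eq]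
    rfl
  have hYH : ((cmap B)ᵀ * V * cmap A + e • ((cmap B)ᵀ * U))ᴴ
      = (cmap A)ᵀ * V * cmap B + (starRingEnd ℂ e) • (U * cmap B) := by
    simp only [conjTranspose_add, conjTranspose_smul, conjTranspose_mul, cmap_tc,
      cmap_conjTranspose, hU.eq, hV.eq, Matrix.mul_assoc, starRingEnd_apply]
  rw [block3_quadform, hXH, hYH]
  simp only [add_mulVec, sub_mulVec, smul_mulVec, Matrix.neg_mulVec, neg_smul,
    one_mulVec, ← Matrix.mulVec_mulVec, mulVec_add, star_add,
    dotProduct_add, add_dotProduct, dotProduct_sub, sub_dotProduct,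
    dotProduct_smul, smul_dotProduct, dotProduct_neg,
    neg_dotProduct, smul_eq_mul, trans_dot]
  ring

lemma re_lt_zero_of_lt {z : ℂ} (h : z < 0) : z.re < 0 := by
  have := (Complex.lt_def.mp h).1
  simpa using this

lemma re_nonneg_of_nonneg {z : ℂ} (h : 0 ≤ z) : 0 ≤ z.re := by
  have := (Complex.le_def.mp h).1
  simpa using this

lemma star_dot_self_re_nonneg {k : ℕ} (w : Fin k → ℂ) : 0 ≤ (star w ⬝ᵥ w).re := by
  rw [dotProduct, Complex.re_sum]
  apply Finset.sum_nonneg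
  intro i _
  have h : (star w) i * w i = ((Complex.normSq (w i) : ℝ) : ℂ) := by
    simp [Pi.star_apply, mul_comm, Complex.mul_conj]
  rw [h]
  simp [Complex.normSq_nonneg]

lemma sigmaMax_lt_of_dot {a b : ℕ} (M : Matrix (Fin a) (Fin b) ℂ) {δ : ℝ} (hδ : 0 < δ)
    (h : ∀ u : Fin b → ℂ, u ≠ 0 →
      (star (M *ᵥ u) ⬝ᵥ (M *ᵥ u)).re < δ ^ 2 * (star u ⬝ᵥ u).re) :
    sigmaMax M < δ := by
  set f := LinearMap.toContinuousLinearMap (Matrix.toEuclideanLin M) with hf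
  have hnorm : ∀ v : EuclideanSpace ℂ (Fin b), v ≠ 0 → ‖f v‖ < δ * ‖v‖ := by
    intro v hv
    set u : Fin b → ℂ := WithLp.equiv 2 (Fin b → ℂ) v with hu
    have hu0 : u ≠ 0 := by
      intro h0
      exact hv (by simpa [hu] using congrArg (WithLp.equiv 2 (Fin b → ℂ)).symm h0)
    have h1 : ‖f v‖ ^ 2 = (star (M *ᵥ u) ⬝ᵥ (M *ᵥ u)).re := by
      rw [← inner_self_eq_norm_sq (𝕜 := ℂ) (f v), EuclideanSpace.inner_eq_star_dotProduct,
        dotProduct_comm]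
      rfl
    have h2 : ‖v‖ ^ 2 = (star u ⬝ᵥ u).re := by
      rw [← inner_self_eq_norm_sq (𝕜 := ℂ) v, EuclideanSpace.inner_eq_star_dotProduct,
        dotProduct_comm]
      rfl
    have h3 := h u hu0
    rw [← h1, ← h2] at h3
    nlinarith [norm_nonneg (f v), norm_nonneg v, mul_pos hδ (norm_pos_iff.2 hv)]
  rcases Nat.eq_zero_or_pos b with hb | hb
  · subst hb
    have hf0 : f = 0 := by
      ext v
      have : v = (0 : EuclideanSpace ℂ (Fin 0)) := Subsingleton.elim v 0
      simp [this]
    rw [sigmaMax, ← hf, hf0]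
    simpa using hδ
  · obtain ⟨v₀, hv₀mem, hmax⟩ :=
      (isCompact_sphere (0 : EuclideanSpace ℂ (Fin b)) 1).exists_isMaxOn
        ⟨EuclideanSpace.single ⟨0, hb⟩ (1:ℂ), by simp⟩
        ((f.continuous.norm).continuousOn)
    have hv₀ : ‖v₀‖ = 1 := by simpa using hv₀mem
    have hv₀0 : v₀ ≠ 0 := by
      intro h0; rw [h0] at hv₀; simp at hv₀
    have hbd : ∀ v : EuclideanSpace ℂ (Fin b), ‖f v‖ ≤ ‖f v₀‖ * ‖v‖ := by
      intro v
      rcases eq_or_ne v 0 with rfl | hv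
      · simp
      · have hnv : (0:ℝ) < ‖v‖ := norm_pos_iff.2 hv
        set v' : EuclideanSpace ℂ (Fin b) := ((‖v‖⁻¹ : ℝ) : ℂ) • v with hv'
        have hv'mem : v' ∈ Metric.sphere (0 : EuclideanSpace ℂ (Fin b)) 1 := by
          simp [hv', norm_smul, abs_of_pos (inv_pos.2 hnv), inv_mul_cancel₀ hnv.ne']
        have h3 : ‖f v'‖ ≤ ‖f v₀‖ := hmax hv'mem
        have h4 : f v' = ((‖v‖⁻¹ : ℝ) : ℂ) • f v := by rw [hv', _root_.map_smul]
        rw [h4, norm_smul] at h3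
        simp only [Complex.norm_real, Real.norm_eq_abs, abs_of_pos (inv_pos.2 hnv)] at h3
        calc ‖f v‖ = (‖v‖⁻¹ * ‖f v‖) * ‖v‖ := by
              rw [mul_comm (‖v‖⁻¹), mul_assoc, inv_mul_cancel₀ hnv.ne', mul_one]
        _ ≤ ‖f v₀‖ * ‖v‖ := mul_le_mul_of_nonneg_right h3 hnv.le
    have h1 : ‖f‖ ≤ ‖f v₀‖ := ContinuousLinearMap.opNorm_le_bound f (norm_nonneg _) hbd
    have h2 : ‖f v₀‖ < δ := by
      have := hnorm v₀ hv₀0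
      rwa [hv₀, mul_one] at this
    rw [sigmaMax, ← hf]
    exact lt_of_le_of_lt h1 h2

/-- High-frequency L∞ bound via LMI (sufficiency direction of Theorem 3). -/
theorem fos_Linf_high_frequency {n m p : ℕ} (ν φ δ ωH : ℝ)
    (hν : 0 < ν) (hν2 : ν < 2) (hφ : φ = (Real.pi / 2) * (ν - 1))
    (hδ : 0 < δ) (hωH : 0 < ωH)
    (A : Matrix (Fin n) (Fin n) ℝ) (B : Matrix (Fin n) (Fin m) ℝ)
    (C : Matrix (Fin p) (Fin n) ℝ) (D : Matrix (Fin p) (Fin m) ℝ)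
    (U V : Matrix (Fin n) (Fin n) ℂ)
    (hU : U.IsHermitian) (hV : V.IsHermitian) (hVpd : V.PosDef)
    (X : Matrix (Fin n) (Fin n) ℂ) (Y : Matrix (Fin m) (Fin n) ℂ)
    (hX : X = Complex.exp ((φ : ℂ) * Complex.I) • ((cmap A)ᵀ * U))
    (hY : Y = (cmap B)ᵀ * V * cmap A +
      Complex.exp ((φ : ℂ) * Complex.I) • ((cmap B)ᵀ * U))
    (hLMI : (-(block3
      (X + Xᴴ + (cmap A)ᵀ * V * cmap A - ((ωH ^ (2 * ν) : ℝ) : ℂ) • V) Yᴴ (cmap C)ᵀ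
      Y (-(δ : ℂ) • 1 + (cmap B)ᵀ * V * cmap B) (cmap D)ᵀ
      (cmap C) (cmap D) (-(δ : ℂ) • 1))).PosDef) :
    sigmaMax (cmap D) < δ ∧
    ∀ ω : ℝ, ωH ≤ ω →
      IsUnit ((((ω ^ ν : ℝ) : ℂ) * Complex.exp ((Real.pi * ν / 2 : ℝ) * Complex.I)) •
          (1 : Matrix (Fin n) (Fin n) ℂ) - cmap A) ∧
      sigmaMax (cmap C *
        ((((ω ^ ν : ℝ) : ℂ) * Complex.exp ((Real.pi * ν / 2 : ℝ) * Complex.I)) •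
          (1 : Matrix (Fin n) (Fin n) ℂ) - cmap A)⁻¹ * cmap B + cmap D) < δ := by
  subst hX
  subst hY
  set e := Complex.exp ((φ : ℂ) * Complex.I) with he
  set ebar := Complex.exp (-(φ : ℂ) * Complex.I) with hebar
  have hce : (starRingEnd ℂ) e = ebar := by
    rw [he, hebar, ← Complex.exp_conj]
    congr 1
    simp [_root_.map_mul, Complex.conj_ofReal, Complex.conj_I]
  have heeb : e * ebar = 1 := by
    rw [he, hebar, ← Complex.exp_add,
      show (φ:ℂ) * Complex.I + -(φ:ℂ) * Complex.I = 0 by ring, Complex.exp_zero]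
  have hc1 : (δ:ℂ) * ((δ⁻¹:ℝ):ℂ) = 1 := by
    rw [← Complex.ofReal_mul, mul_inv_cancel₀ hδ.ne', Complex.ofReal_one]
  -- the central inequality
  have hw2 : ∀ (x : Fin n → ℂ) (u : Fin m → ℂ), x ≠ 0 ∨ u ≠ 0 →
      e * (star (cmap A *ᵥ x + cmap B *ᵥ u) ⬝ᵥ (U *ᵥ x))
      + ebar * (star x ⬝ᵥ (U *ᵥ (cmap A *ᵥ x + cmap B *ᵥ u)))
      + star (cmap A *ᵥ x + cmap B *ᵥ u) ⬝ᵥ (V *ᵥ (cmap A *ᵥ x + cmap B *ᵥ u))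
      - ((ωH ^ (2 * ν) : ℝ) : ℂ) * (star x ⬝ᵥ (V *ᵥ x)) - (δ:ℂ) * (star u ⬝ᵥ u)
      + ((δ⁻¹ : ℝ) : ℂ) * (star (cmap C *ᵥ x + cmap D *ᵥ u) ⬝ᵥ (cmap C *ᵥ x + cmap D *ᵥ u))
      < 0 := by
    intro x u hxu
    have hvne : Sum.elim (Sum.elim x u)
        (((δ⁻¹ : ℝ) : ℂ) • (cmap C *ᵥ x + cmap D *ᵥ u)) ≠ 0 := by
      intro h0
      have hx0 : x = 0 := funext fun i => congrFun h0 (Sum.inl (Sum.inl i))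
      have hu0 : u = 0 := funext fun i => congrFun h0 (Sum.inl (Sum.inr i))
      rcases hxu with h | h
      exacts [h hx0, h hu0]
    have hq0 := hLMI.dotProduct_mulVec_pos hvne
    rw [Matrix.neg_mulVec, dotProduct_neg] at hq0
    rw [quad_eval δ (ωH ^ (2 * ν)) e A B C D U V hU hV x u
      (((δ⁻¹ : ℝ) : ℂ) • (cmap C *ᵥ x + cmap D *ᵥ u)), hce] at hq0
    have hq : e * (star (cmap A *ᵥ x + cmap B *ᵥ u) ⬝ᵥ (U *ᵥ x))
      + ebar * (star x ⬝ᵥ (U *ᵥ (cmap A *ᵥ x + cmap B *ᵥ u)))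
      + star (cmap A *ᵥ x + cmap B *ᵥ u) ⬝ᵥ (V *ᵥ (cmap A *ᵥ x + cmap B *ᵥ u))
      - ((ωH ^ (2 * ν) : ℝ) : ℂ) * (star x ⬝ᵥ (V *ᵥ x)) - (δ:ℂ) * (star u ⬝ᵥ u)
      + star (cmap C *ᵥ x + cmap D *ᵥ u) ⬝ᵥ (((δ⁻¹ : ℝ) : ℂ) • (cmap C *ᵥ x + cmap D *ᵥ u))
      + star (((δ⁻¹ : ℝ) : ℂ) • (cmap C *ᵥ x + cmap D *ᵥ u)) ⬝ᵥ (cmap C *ᵥ x + cmap D *ᵥ u)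
      - (δ:ℂ) * (star (((δ⁻¹ : ℝ) : ℂ) • (cmap C *ᵥ x + cmap D *ᵥ u)) ⬝ᵥ
          (((δ⁻¹ : ℝ) : ℂ) • (cmap C *ᵥ x + cmap D *ᵥ u))) < 0 := neg_pos.mp hq0
    have hyterm : star (cmap C *ᵥ x + cmap D *ᵥ u) ⬝ᵥ (((δ⁻¹ : ℝ) : ℂ) • (cmap C *ᵥ x + cmap D *ᵥ u))
      + star (((δ⁻¹ : ℝ) : ℂ) • (cmap C *ᵥ x + cmap D *ᵥ u)) ⬝ᵥ (cmap C *ᵥ x + cmap D *ᵥ u)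
      - (δ:ℂ) * (star (((δ⁻¹ : ℝ) : ℂ) • (cmap C *ᵥ x + cmap D *ᵥ u)) ⬝ᵥ
          (((δ⁻¹ : ℝ) : ℂ) • (cmap C *ᵥ x + cmap D *ᵥ u)))
      = ((δ⁻¹ : ℝ) : ℂ) * (star (cmap C *ᵥ x + cmap D *ᵥ u) ⬝ᵥ (cmap C *ᵥ x + cmap D *ᵥ u)) := by
      simp only [star_smul, smul_dotProduct, dotProduct_smul, smul_eq_mul, RCLike.star_def,
        Complex.conj_ofReal]
      linear_combination (-(((δ⁻¹:ℝ):ℂ) *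
        (star (cmap C *ᵥ x + cmap D *ᵥ u) ⬝ᵥ (cmap C *ᵥ x + cmap D *ᵥ u)))) * hc1
    calc e * (star (cmap A *ᵥ x + cmap B *ᵥ u) ⬝ᵥ (U *ᵥ x))
      + ebar * (star x ⬝ᵥ (U *ᵥ (cmap A *ᵥ x + cmap B *ᵥ u)))
      + star (cmap A *ᵥ x + cmap B *ᵥ u) ⬝ᵥ (V *ᵥ (cmap A *ᵥ x + cmap B *ᵥ u))
      - ((ωH ^ (2 * ν) : ℝ) : ℂ) * (star x ⬝ᵥ (V *ᵥ x)) - (δ:ℂ) * (star u ⬝ᵥ u)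
      + ((δ⁻¹ : ℝ) : ℂ) * (star (cmap C *ᵥ x + cmap D *ᵥ u) ⬝ᵥ (cmap C *ᵥ x + cmap D *ᵥ u))
        = e * (star (cmap A *ᵥ x + cmap B *ᵥ u) ⬝ᵥ (U *ᵥ x))
      + ebar * (star x ⬝ᵥ (U *ᵥ (cmap A *ᵥ x + cmap B *ᵥ u)))
      + star (cmap A *ᵥ x + cmap B *ᵥ u) ⬝ᵥ (V *ᵥ (cmap A *ᵥ x + cmap B *ᵥ u))
      - ((ωH ^ (2 * ν) : ℝ) : ℂ) * (star x ⬝ᵥ (V *ᵥ x)) - (δ:ℂ) * (star u ⬝ᵥ u)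
      + star (cmap C *ᵥ x + cmap D *ᵥ u) ⬝ᵥ (((δ⁻¹ : ℝ) : ℂ) • (cmap C *ᵥ x + cmap D *ᵥ u))
      + star (((δ⁻¹ : ℝ) : ℂ) • (cmap C *ᵥ x + cmap D *ᵥ u)) ⬝ᵥ (cmap C *ᵥ x + cmap D *ᵥ u)
      - (δ:ℂ) * (star (((δ⁻¹ : ℝ) : ℂ) • (cmap C *ᵥ x + cmap D *ᵥ u)) ⬝ᵥ
          (((δ⁻¹ : ℝ) : ℂ) • (cmap C *ᵥ x + cmap D *ᵥ u))) := by
          linear_combination (-1 : ℂ) * hyterm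
    _ < 0 := hq
  constructor
  · -- σmax(D) < δ
    apply sigmaMax_lt_of_dot (cmap D) hδ
    intro u hu
    have hq := hw2 0 u (Or.inr hu)
    simp only [Matrix.mulVec_zero, star_zero, zero_dotProduct, dotProduct_zero, mul_zero,
      zero_add, sub_zero, add_zero] at hq
    have h1 : 0 ≤ (star (cmap B *ᵥ u) ⬝ᵥ (V *ᵥ (cmap B *ᵥ u))).re :=
      re_nonneg_of_nonneg (hVpd.posSemidef.dotProduct_mulVec_nonneg _)
    have h2 := re_lt_zero_of_lt hq
    simp only [Complex.add_re, Complex.sub_re, Complex.re_ofReal_mul] at h2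
    have h3 : 0 ≤ (star u ⬝ᵥ u).re := star_dot_self_re_nonneg u
    have h4 : δ⁻¹ * (star (cmap D *ᵥ u) ⬝ᵥ (cmap D *ᵥ u)).re < δ * (star u ⬝ᵥ u).re := by
      linarith
    have h5 := mul_lt_mul_of_pos_left h4 hδ
    rw [← mul_assoc, mul_inv_cancel₀ hδ.ne', one_mul] at h5
    nlinarith [h5]
  · -- high frequency bound
    intro ω hω
    have hωpos : 0 < ω := lt_of_lt_of_le hωH hω
    have hI2 : Complex.exp (((Real.pi / 2 : ℝ) : ℂ) * Complex.I) = Complex.I := by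
      rw [Complex.exp_mul_I, ← Complex.ofReal_cos, ← Complex.ofReal_sin,
        Real.cos_pi_div_two, Real.sin_pi_div_two]
      simp
    have hsE : Complex.exp (((Real.pi * ν / 2 : ℝ) : ℂ) * Complex.I) = e * Complex.I := by
      have h1 : (Real.pi * ν / 2 : ℝ) = φ + Real.pi / 2 := by rw [hφ]; ring
      rw [show ((Real.pi * ν / 2 : ℝ) : ℂ) * Complex.I
          = (φ:ℂ) * Complex.I + ((Real.pi / 2 : ℝ) : ℂ) * Complex.I by
            rw [show ((Real.pi * ν / 2 : ℝ) : ℂ) = ((φ + Real.pi/2 : ℝ) : ℂ) from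
              congrArg _ h1]
            push_cast
            ring,
        Complex.exp_add, hI2, ← he]
    set s : ℂ := ((ω ^ ν : ℝ) : ℂ) * Complex.exp ((Real.pi * ν / 2 : ℝ) * Complex.I) with hs
    have hsI : s = ((ω ^ ν : ℝ) : ℂ) * (e * Complex.I) := by rw [hs, hsE]
    have hconj : star s = ((ω ^ ν : ℝ) : ℂ) * (ebar * -Complex.I) := by
      rw [RCLike.star_def, hsI, _root_.map_mul, _root_.map_mul, Complex.conj_ofReal,
        Complex.conj_I, hce]
    have hr2 : (ω : ℝ) ^ ν * ω ^ ν = ω ^ (2 * ν) := by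
      rw [show (2 * ν) = ν + ν by ring, Real.rpow_add hωpos]
    have hcss : star s * s = ((ω ^ (2 * ν) : ℝ) : ℂ) := by
      rw [hconj, hsI]
      calc ((ω ^ ν : ℝ) : ℂ) * (ebar * -Complex.I) * (((ω ^ ν : ℝ) : ℂ) * (e * Complex.I))
          = ((ω ^ ν : ℝ) : ℂ) * ((ω ^ ν : ℝ) : ℂ) * (e * ebar) * (-(Complex.I * Complex.I)) := by
            ring
        _ = ((ω ^ (2 * ν) : ℝ) : ℂ) := by
            rw [heeb, Complex.I_mul_I, ← Complex.ofReal_mul, hr2]; ring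
    have hU0 : e * star s + ebar * s = 0 := by
      rw [hconj, hsI]; ring
    have hmono : ωH ^ (2 * ν) ≤ ω ^ (2 * ν) :=
      Real.rpow_le_rpow hωH.le hω (by positivity)
    -- kernel triviality
    have hker : ∀ xx : Fin n → ℂ,
        (s • (1 : Matrix (Fin n) (Fin n) ℂ) - cmap A) *ᵥ xx = 0 → xx = 0 := by
      intro xx hxx
      by_contra hne
      have hz : cmap A *ᵥ xx + cmap B *ᵥ (0 : Fin m → ℂ) = s • xx := by
        rw [Matrix.mulVec_zero, add_zero]
        rw [Matrix.sub_mulVec, Matrix.smul_mulVec, Matrix.one_mulVec, sub_eq_zero] at hxx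
        exact hxx.symm
      have hq := hw2 xx 0 (Or.inl hne)
      rw [hz] at hq
      have hEq : e * (star (s • xx) ⬝ᵥ (U *ᵥ xx))
          + ebar * (star xx ⬝ᵥ (U *ᵥ (s • xx)))
          + star (s • xx) ⬝ᵥ (V *ᵥ (s • xx))
          - ((ωH ^ (2 * ν) : ℝ) : ℂ) * (star xx ⬝ᵥ (V *ᵥ xx))
          - (δ:ℂ) * (star (0 : Fin m → ℂ) ⬝ᵥ (0 : Fin m → ℂ))
          + ((δ⁻¹ : ℝ) : ℂ) * (star (cmap C *ᵥ xx + cmap D *ᵥ (0 : Fin m → ℂ)) ⬝ᵥ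
              (cmap C *ᵥ xx + cmap D *ᵥ (0 : Fin m → ℂ)))
          = (((ω ^ (2 * ν) : ℝ) : ℂ) - ((ωH ^ (2 * ν) : ℝ) : ℂ)) * (star xx ⬝ᵥ (V *ᵥ xx))
          + ((δ⁻¹ : ℝ) : ℂ) * (star (cmap C *ᵥ xx) ⬝ᵥ (cmap C *ᵥ xx)) := by
        simp only [star_smul, smul_dotProduct, Matrix.mulVec_smul, dotProduct_smul,
          smul_eq_mul, Matrix.mulVec_zero, star_zero, zero_dotProduct, dotProduct_zero,
          mul_zero, sub_zero, add_zero]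
        linear_combination (star xx ⬝ᵥ (U *ᵥ xx)) * hU0 + (star xx ⬝ᵥ (V *ᵥ xx)) * hcss
      rw [hEq] at hq
      have h2 := re_lt_zero_of_lt hq
      rw [← Complex.ofReal_sub] at h2
      simp only [Complex.add_re, Complex.re_ofReal_mul] at h2
      have ha : 0 ≤ (star xx ⬝ᵥ (V *ᵥ xx)).re := re_nonneg_of_nonneg (hVpd.posSemidef.dotProduct_mulVec_nonneg _)
      have hc : 0 ≤ (star (cmap C *ᵥ xx) ⬝ᵥ (cmap C *ᵥ xx)).re := star_dot_self_re_nonneg _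
      have hm1 := mul_nonneg (sub_nonneg.2 hmono) ha
      have hm2 := mul_nonneg (inv_nonneg.2 hδ.le) hc
      linarith
    have hunit : IsUnit (s • (1 : Matrix (Fin n) (Fin n) ℂ) - cmap A) := by
      rw [← Matrix.mulVec_injective_iff_isUnit]
      intro a b hab
      have hz := hker (a - b) (by rw [Matrix.mulVec_sub, hab, sub_self])
      exact sub_eq_zero.mp hz
    refine ⟨hunit, ?_⟩
    apply sigmaMax_lt_of_dot _ hδ
    intro u hu
    have hGw : (cmap C * (s • (1 : Matrix (Fin n) (Fin n) ℂ) - cmap A)⁻¹ * cmap B + cmap D) *ᵥ u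
        = cmap C *ᵥ ((s • (1 : Matrix (Fin n) (Fin n) ℂ) - cmap A)⁻¹ *ᵥ (cmap B *ᵥ u))
          + cmap D *ᵥ u := by
      rw [Matrix.add_mulVec, ← Matrix.mulVec_mulVec, ← Matrix.mulVec_mulVec]
    rw [hGw]
    set x : Fin n → ℂ := (s • (1 : Matrix (Fin n) (Fin n) ℂ) - cmap A)⁻¹ *ᵥ (cmap B *ᵥ u)
      with hxdef
    have hzx : (s • (1 : Matrix (Fin n) (Fin n) ℂ) - cmap A) *ᵥ x = cmap B *ᵥ u := by
      rw [hxdef, Matrix.mulVec_mulVec,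
        Matrix.mul_nonsing_inv _ ((Matrix.isUnit_iff_isUnit_det _).mp hunit),
        Matrix.one_mulVec]
    have hz : cmap A *ᵥ x + cmap B *ᵥ u = s • x := by
      rw [← hzx, Matrix.sub_mulVec, Matrix.smul_mulVec, Matrix.one_mulVec]
      abel
    have hq := hw2 x u (Or.inr hu)
    rw [hz] at hq
    have hEq : e * (star (s • x) ⬝ᵥ (U *ᵥ x))
        + ebar * (star x ⬝ᵥ (U *ᵥ (s • x)))
        + star (s • x) ⬝ᵥ (V *ᵥ (s • x))
        - ((ωH ^ (2 * ν) : ℝ) : ℂ) * (star x ⬝ᵥ (V *ᵥ x))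
        - (δ:ℂ) * (star u ⬝ᵥ u)
        + ((δ⁻¹ : ℝ) : ℂ) * (star (cmap C *ᵥ x + cmap D *ᵥ u) ⬝ᵥ (cmap C *ᵥ x + cmap D *ᵥ u))
        = (((ω ^ (2 * ν) : ℝ) : ℂ) - ((ωH ^ (2 * ν) : ℝ) : ℂ)) * (star x ⬝ᵥ (V *ᵥ x))
        - (δ:ℂ) * (star u ⬝ᵥ u)
        + ((δ⁻¹ : ℝ) : ℂ) * (star (cmap C *ᵥ x + cmap D *ᵥ u) ⬝ᵥ (cmap C *ᵥ x + cmap D *ᵥ u)) := by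
      simp only [star_smul, smul_dotProduct, Matrix.mulVec_smul, dotProduct_smul, smul_eq_mul]
      linear_combination (star x ⬝ᵥ (U *ᵥ x)) * hU0 + (star x ⬝ᵥ (V *ᵥ x)) * hcss
    rw [hEq] at hq
    have h2 := re_lt_zero_of_lt hq
    rw [← Complex.ofReal_sub] at h2
    simp only [Complex.add_re, Complex.sub_re, Complex.re_ofReal_mul] at h2
    have ha : 0 ≤ (star x ⬝ᵥ (V *ᵥ x)).re := re_nonneg_of_nonneg (hVpd.posSemidef.dotProduct_mulVec_nonneg _)
    have hm1 := mul_nonneg (sub_nonneg.2 hmono) ha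
    have h4 : δ⁻¹ * (star (cmap C *ᵥ x + cmap D *ᵥ u) ⬝ᵥ (cmap C *ᵥ x + cmap D *ᵥ u)).re
        < δ * (star u ⬝ᵥ u).re := by linarith
    have h5 := mul_lt_mul_of_pos_left h4 hδ
    rw [← mul_assoc, mul_inv_cancel₀ hδ.ne', one_mul] at h5
    nlinarith [h5]
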